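/- Let {h̄^(k)}_{k≥1} be positive and satisfy h̄^(k+1) - p h̄^(k) = Σ_{j=1}^J s_j max_{q ∈ [max(1,k-M), k]} (h̄^(q))^{η_j} for all k ≥ 1, with 0 < p < 1, s_j ≥ 0, η_j > 1, and suppose h̄^(k+1) ≤ δ^⌈k/M⌉ (b h̄^(1)) for all k ≥ 1 for some δ ∈ (0,1), b ≥ 1. Then lim_{k→∞} h̄^(k+1)/h̄^(k) = p. -/

import Mathlib

open Filter

/-- Maximum of `g` over the integer index range `[a, b]`. -/
noncomputable def seqMax (g : ℕ → ℝ) (a b : ℕ) : ℝ := sSup (g '' Set.Icc a b)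

/-- Asymptotic rate `p` for the A-CIAG upper bound sequence (Proposition 6 (iii)). -/
theorem stmt_8 (hbar : ℕ → ℝ) (p δ b : ℝ) (J M : ℕ) (s η : ℕ → ℝ)
    (hpos : ∀ k, 1 ≤ k → 0 < hbar k)
    (hp : 0 < p) (hp1 : p < 1)
    (hs : ∀ j, j < J → 0 ≤ s j) (hη : ∀ j, j < J → 1 < η j)
    (hJ : 1 ≤ J) (hM : 1 ≤ M)
    (hδ : 0 < δ) (hδ1 : δ < 1) (hb : 1 ≤ b)
    (hrec : ∀ k, 1 ≤ k →
      hbar (k + 1) - p * hbar k = ∑ j ∈ Finset.range J,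
        s j * seqMax (fun q => hbar q ^ η j) (max 1 (k - M)) k)
    (hbound : ∀ k, 1 ≤ k → hbar (k + 1) ≤ δ ^ ((k + M - 1) / M) * (b * hbar 1)) :
    Tendsto (fun k => hbar (k + 1) / hbar k) atTop (nhds p) := by
  have hpM : 0 < p ^ M := pow_pos hp M
  have hmem : ∀ k : ℕ, 1 ≤ k → k ∈ Set.Icc (max 1 (k - M)) k := by
    intro k hk
    exact Set.mem_Icc.2 ⟨max_le hk (Nat.sub_le _ _), le_refl k⟩
  have hseq_le : ∀ (f : ℕ → ℝ) (a c : ℕ), ∀ q ∈ Set.Icc a c, f q ≤ seqMax f a c := by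
    intro f a c q hq
    exact le_csSup ((Set.finite_Icc a c).image f).bddAbove (Set.mem_image_of_mem f hq)
  have hseqMax_le : ∀ (f : ℕ → ℝ) (a c : ℕ) (x : ℝ), a ≤ c →
      (∀ q ∈ Set.Icc a c, f q ≤ x) → seqMax f a c ≤ x := by
    intro f a c x hac h
    apply csSup_le ((Set.nonempty_Icc.2 hac).image f)
    rintro y ⟨q, hq, rfl⟩; exact h q hq
  have hterm_nonneg : ∀ k, 1 ≤ k → ∀ j ∈ Finset.range J,
      0 ≤ s j * seqMax (fun q => hbar q ^ η j) (max 1 (k - M)) k := by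
    intro k hk j hj
    refine mul_nonneg (hs j (Finset.mem_range.1 hj)) ?_
    have h1 := hseq_le (fun q => hbar q ^ η j) _ _ k (hmem k hk)
    exact le_trans (Real.rpow_nonneg (hpos k hk).le _) h1
  have hstep : ∀ k, 1 ≤ k → p * hbar k ≤ hbar (k + 1) := by
    intro k hk
    have h := hrec k hk
    have h2 : (0:ℝ) ≤ hbar (k+1) - p * hbar k := by
      rw [h]; exact Finset.sum_nonneg (hterm_nonneg k hk)
    linarith
  have hiter : ∀ k, 1 ≤ k → ∀ d : ℕ, p ^ d * hbar k ≤ hbar (k + d) := by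
    intro k hk d
    induction d with
    | zero => simp
    | succ d ih =>
      have h1 : p * (p ^ d * hbar k) ≤ p * hbar (k + d) :=
        mul_le_mul_of_nonneg_left ih hp.le
      calc p ^ (d+1) * hbar k = p * (p ^ d * hbar k) := by ring
        _ ≤ p * hbar (k + d) := h1
        _ ≤ hbar (k + d + 1) := hstep (k + d) (le_trans hk (Nat.le_add_right _ _))
  -- hbar q ≤ hbar k / p^M for q in the window
  have hwin : ∀ k, 1 ≤ k → ∀ q ∈ Set.Icc (max 1 (k - M)) k, hbar q ≤ hbar k / p ^ M := by
    intro k hk q hq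
    obtain ⟨hq1, hq2⟩ := Set.mem_Icc.1 hq
    have hq1' : 1 ≤ q := le_trans (le_max_left _ _) hq1
    have hd : k - q ≤ M := by
      have : k - M ≤ q := le_trans (le_max_right _ _) hq1
      omega
    have h1 : p ^ (k - q) * hbar q ≤ hbar k := by
      have := hiter q hq1' (k - q)
      rwa [Nat.add_sub_cancel' hq2] at this
    have h2 : p ^ M ≤ p ^ (k - q) := pow_le_pow_of_le_one hp.le hp1.le hd
    have h3 : p ^ M * hbar q ≤ hbar k :=
      le_trans (mul_le_mul_of_nonneg_right h2 (hpos q hq1').le) h1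
    rw [le_div_iff₀ hpM]
    linarith
  set g : ℕ → ℝ := fun k => ∑ j ∈ Finset.range J,
      s j * (hbar k ^ (η j - 1) / (p ^ M) ^ η j) with hg
  -- upper bound on ratio
  have hupper : ∀ k, 1 ≤ k → hbar (k + 1) / hbar k ≤ p + g k := by
    intro k hk
    have hx : 0 < hbar k := hpos k hk
    have hS : hbar (k+1) - p * hbar k ≤ g k * hbar k := by
      rw [hrec k hk, hg, Finset.sum_mul]
      refine Finset.sum_le_sum ?_
      intro j hj
      have hj' := Finset.mem_range.1 hj
      have hηj := hη j hj'
      have hbd : seqMax (fun q => hbar q ^ η j) (max 1 (k - M)) k ≤ (hbar k / p ^ M) ^ η j := by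
        refine hseqMax_le _ _ _ _ (max_le hk (Nat.sub_le _ _)) ?_
        intro q hq
        have hq1' : 1 ≤ q := le_trans (le_max_left _ _) (Set.mem_Icc.1 hq).1
        exact Real.rpow_le_rpow (hpos q hq1').le (hwin k hk q hq) (by linarith)
      have heq : (hbar k / p ^ M) ^ η j = hbar k ^ (η j - 1) / (p ^ M) ^ η j * hbar k := by
        rw [Real.div_rpow hx.le hpM.le, Real.rpow_sub hx, Real.rpow_one]
        field_simp
      calc s j * seqMax (fun q => hbar q ^ η j) (max 1 (k - M)) k
          ≤ s j * ((hbar k / p ^ M) ^ η j) :=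
            mul_le_mul_of_nonneg_left hbd (hs j hj')
        _ = s j * (hbar k ^ (η j - 1) / (p ^ M) ^ η j) * hbar k := by rw [heq]; ring
    rw [div_le_iff₀ hx]
    nlinarith [hS]
  have hlower : ∀ k, 1 ≤ k → p ≤ hbar (k + 1) / hbar k := by
    intro k hk
    rw [le_div_iff₀ (hpos k hk)]
    exact hstep k hk
  -- hbar tends to 0
  have hexp : Tendsto (fun k : ℕ => (k + M - 1) / M) atTop atTop := by
    apply tendsto_atTop_atTop.2
    intro N
    refine ⟨N * M, fun k hk => ?_⟩
    have h1 : N * M ≤ k + M - 1 := by omega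
    calc N = N * M / M := (Nat.mul_div_cancel N hM).symm
      _ ≤ (k + M - 1) / M := Nat.div_le_div_right h1
  have hδ0 : Tendsto (fun n : ℕ => δ ^ n) atTop (nhds 0) :=
    tendsto_pow_atTop_nhds_zero_of_lt_one hδ.le hδ1
  have hub0 : Tendsto (fun k : ℕ => δ ^ ((k + M - 1) / M) * (b * hbar 1)) atTop (nhds 0) := by
    have := (hδ0.comp hexp).mul_const (b * hbar 1)
    simpa using this
  have hbar0' : Tendsto (fun k => hbar (k + 1)) atTop (nhds 0) := by
    apply tendsto_of_tendsto_of_tendsto_of_le_of_le' tendsto_const_nhds hub0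
    · filter_upwards [eventually_ge_atTop 1] with k hk
      exact (hpos (k+1) (by omega)).le
    · filter_upwards [eventually_ge_atTop 1] with k hk
      exact hbound k hk
  have hbar0 : Tendsto hbar atTop (nhds 0) := (tendsto_add_atTop_iff_nat 1).1 hbar0'
  -- g tends to 0
  have hg0 : Tendsto g atTop (nhds 0) := by
    have : Tendsto (fun k => ∑ j ∈ Finset.range J,
        s j * (hbar k ^ (η j - 1) / (p ^ M) ^ η j)) atTop
        (nhds (∑ j ∈ Finset.range J, (0:ℝ))) := by
      apply tendsto_finset_sum
      intro j hj
      have hj' := Finset.mem_range.1 hj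
      have h1 : Tendsto (fun k => hbar k ^ (η j - 1)) atTop (nhds ((0:ℝ) ^ (η j - 1))) :=
        hbar0.rpow_const (Or.inr (by linarith [hη j hj']))
      have h2 : ((0:ℝ) ^ (η j - 1)) = 0 := Real.zero_rpow (by linarith [hη j hj'])
      rw [h2] at h1
      have := (h1.div_const ((p ^ M) ^ η j)).const_mul (s j)
      simpa using this
    simpa using this
  have hpg : Tendsto (fun k => p + g k) atTop (nhds p) := by
    have := tendsto_const_nhds.add hg0 (α := ℕ) (f := fun _ : ℕ => p)
    simpa using this
  apply tendsto_of_tendsto_of_tendsto_of_le_of_le' (tendsto_const_nhds) hpg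
  · filter_upwards [eventually_ge_atTop 1] with k hk using hlower k hk
  · filter_upwards [eventually_ge_atTop 1] with k hk using hupper k hk
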